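/- Let G be a profinite group and k a field. The following conditions are equivalent: (a) the category of discrete G-modules over k has a non-zero projective object; (b) the category of discrete G-modules over k has enough projective objects; (c) there exists an open normal subgroup H of G such that for every open normal subgroup K of G with K ≤ H, the characteristic of k does not divide the (finite) index [H : K]. (Condition (c) says that the characteristic of k occurs with finite exponent in the supernatural order |G|; in characteristic 0 it holds automatically.) -/

import Mathlib

open Function

/-- A module over the group algebra `k[G]` is a *discrete* `G`-module if every element is
fixed by some open normal subgroup of `G`. -/
def IsDiscreteGModK (G : Type) [Group G] [TopologicalSpace G] (k : Type) [Field k]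
    (M : ModuleCat.{0} (MonoidAlgebra k G)) : Prop :=
  ∀ x : M, ∃ H : Subgroup G, H.Normal ∧ IsOpen (H : Set G) ∧
    ∀ h ∈ H, (MonoidAlgebra.of k G h) • x = x

/-- `P` is a projective object of the category of discrete `G`-modules over `k`. -/
def IsProjectiveDiscreteGModK (G : Type) [Group G] [TopologicalSpace G] (k : Type) [Field k]
    (P : ModuleCat.{0} (MonoidAlgebra k G)) : Prop :=
  ∀ (M N : ModuleCat.{0} (MonoidAlgebra k G)),
    IsDiscreteGModK G k M → IsDiscreteGModK G k N →
    ∀ f : M →ₗ[MonoidAlgebra k G] N, Surjective f →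
      ∀ g : P →ₗ[MonoidAlgebra k G] N,
        ∃ h : P →ₗ[MonoidAlgebra k G] M, f.comp h = g

open MonoidAlgebra

namespace CK
variable {G : Type} [Group G] {k : Type} [Field k]

variable (k) in
noncomputable def qmHom (K : Subgroup G) [K.Normal] :
    MonoidAlgebra k G →+* MonoidAlgebra k (G ⧸ K) :=
  MonoidAlgebra.mapDomainRingHom k (QuotientGroup.mk' K)

noncomputable instance qmMod (K : Subgroup G) [K.Normal] :
    Module (MonoidAlgebra k G) (MonoidAlgebra k (G ⧸ K)) :=
  Module.compHom _ (qmHom k K)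

theorem qm_smul_def (K : Subgroup G) [K.Normal] (r : MonoidAlgebra k G)
    (x : MonoidAlgebra k (G ⧸ K)) : r • x = qmHom k K r * x := rfl

theorem qmHom_single (K : Subgroup G) [K.Normal] (g : G) (c : k) :
    qmHom k K (single g c) = single ((g : G ⧸ K)) c := by
  simp [qmHom, MonoidAlgebra.mapDomainRingHom, Finsupp.mapDomain_single]

theorem qm_of_smul_fixed (K : Subgroup G) [K.Normal] (κ : G) (hκ : κ ∈ K)
    (x : MonoidAlgebra k (G ⧸ K)) : (MonoidAlgebra.of k G κ) • x = x := by
  rw [qm_smul_def, MonoidAlgebra.of_apply, qmHom_single]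
  have h1 : ((κ : G ⧸ K)) = 1 := (QuotientGroup.eq_one_iff κ).mpr hκ
  rw [h1, ← MonoidAlgebra.one_def, one_mul]

theorem qm_single_smul_single (K : Subgroup G) [K.Normal] (g : G) (c : k)
    (q : G ⧸ K) (d : k) :
    (single g c : MonoidAlgebra k G) • (single q d : MonoidAlgebra k (G ⧸ K))
      = single ((g : G ⧸ K) * q) (c * d) := by
  rw [qm_smul_def, qmHom_single, MonoidAlgebra.single_mul_single]

variable {M : Type} [AddCommGroup M] [Module (MonoidAlgebra k G) M]

/-- the orbit function G/K → M attached to a K-fixed vector m -/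
noncomputable def nuFun (K : Subgroup G) [K.Normal] (m : M)
    (hm : ∀ κ ∈ K, MonoidAlgebra.of k G κ • m = m) : G ⧸ K → M :=
  Quotient.lift (fun g => MonoidAlgebra.of k G g • m) (by
    intro a b hab
    have h : a⁻¹ * b ∈ K := (QuotientGroup.leftRel_apply).mp hab
    have hb : b = a * (a⁻¹ * b) := by group
    show MonoidAlgebra.of k G a • m = MonoidAlgebra.of k G b • m
    conv_rhs => rw [hb, map_mul, mul_smul, hm _ h])

theorem nuFun_mk (K : Subgroup G) [K.Normal] (m : M)
    (hm : ∀ κ ∈ K, MonoidAlgebra.of k G κ • m = m) (g : G) :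
    nuFun K m hm ((g : G ⧸ K)) = MonoidAlgebra.of k G g • m := rfl

section lift
variable (K : Subgroup G) [K.Normal] (m : M)
  (hm : ∀ κ ∈ K, MonoidAlgebra.of k G κ • m = m)

noncomputable def liftFun : MonoidAlgebra k (G ⧸ K) → M :=
  fun x => x.coeff.sum fun q c => (algebraMap k (MonoidAlgebra k G) c) • nuFun K m hm q

theorem liftFun_add (x y : MonoidAlgebra k (G ⧸ K)) :
    liftFun K m hm (x + y) = liftFun K m hm x + liftFun K m hm y :=
  Finsupp.sum_add_index' (by simp) (by intro q c d; rw [map_add, add_smul])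

theorem liftFun_single (q : G ⧸ K) (c : k) :
    liftFun K m hm (single q c) = (algebraMap k (MonoidAlgebra k G) c) • nuFun K m hm q :=
  Finsupp.sum_single_index (by simp)

theorem liftFun_smul (r : MonoidAlgebra k G) (x : MonoidAlgebra k (G ⧸ K)) :
    liftFun K m hm (r • x) = r • liftFun K m hm x := by
  induction x using MonoidAlgebra.induction_linear with
  | zero => simp [smul_zero, liftFun]
  | add x y hx hy => rw [smul_add, liftFun_add, liftFun_add, hx, hy, smul_add]
  | single q c =>
    induction r using MonoidAlgebra.induction_linear with
    | zero =>
      have : (0 : MonoidAlgebra k G) • (single q c : MonoidAlgebra k (G ⧸ K)) = 0 :=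
        zero_smul _ _
      simp [this, liftFun, zero_smul]
    | add r s hr hs => rw [add_smul, liftFun_add, hr, hs, add_smul]
    | single g d =>
      rw [qm_single_smul_single, liftFun_single, liftFun_single]
      induction q using Quotient.inductionOn with
      | h u =>
        have h1 : ((g : G ⧸ K)) * ((u : G ⧸ K)) = ((g * u : G) : G ⧸ K) := rfl
        rw [h1, nuFun_mk, nuFun_mk]
        simp only [smul_smul]
        congr 1
        rw [← MonoidAlgebra.single_eq_algebraMap_mul_of,
          ← MonoidAlgebra.single_eq_algebraMap_mul_of,
          MonoidAlgebra.single_mul_single]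

noncomputable def liftQM : MonoidAlgebra k (G ⧸ K) →ₗ[MonoidAlgebra k G] M where
  toFun := liftFun K m hm
  map_add' := liftFun_add K m hm
  map_smul' := liftFun_smul K m hm

theorem liftQM_single (q : G ⧸ K) (c : k) :
    liftQM K m hm (single q c) = (algebraMap k (MonoidAlgebra k G) c) • nuFun K m hm q :=
  liftFun_single K m hm q c

theorem liftQM_one : liftQM K m hm (single (1 : G ⧸ K) 1) = m := by
  rw [liftQM_single, map_one, one_smul]
  have : ((1 : G ⧸ K)) = ((1 : G) : G ⧸ K) := rfl
  rw [this, nuFun_mk, map_one, one_smul]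

end lift

theorem qm_ext {N : Type} [AddCommGroup N] [Module (MonoidAlgebra k G) N]
    (K : Subgroup G) [K.Normal]
    (f₁ f₂ : MonoidAlgebra k (G ⧸ K) →ₗ[MonoidAlgebra k G] N)
    (h : f₁ (single (1 : G ⧸ K) 1) = f₂ (single (1 : G ⧸ K) 1)) : f₁ = f₂ := by
  ext x
  induction x using MonoidAlgebra.induction_linear with
  | zero => simp
  | add x y hx hy => rw [map_add, map_add, hx, hy]
  | single q c =>
    induction q using Quotient.inductionOn with
    | h g =>
      show f₁ (single ((g : G ⧸ K)) c) = f₂ (single ((g : G ⧸ K)) c)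
      have h1 : (single ((g : G ⧸ K)) c : MonoidAlgebra k (G ⧸ K))
          = (single g c : MonoidAlgebra k G) • (single (1 : G ⧸ K) 1) := by
        rw [qm_single_smul_single, mul_one, mul_one]
      rw [h1, map_smul, map_smul, h]

section proj
variable [TopologicalSpace G] [IsTopologicalGroup G] [CompactSpace G]

theorem qm_lift_exists {H : Subgroup G} (hHn : H.Normal) (hHo : IsOpen (H : Set G))
    (hH : ∀ K : Subgroup G, K.Normal → IsOpen (K : Set G) → K ≤ H →
      ¬ (ringChar k : ℕ) ∣ K.relIndex H)
    (K : Subgroup G) [K.Normal] (hKo : IsOpen (K : Set G)) (hKH : K ≤ H)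
    {M N : Type} [AddCommGroup M] [Module (MonoidAlgebra k G) M]
    [AddCommGroup N] [Module (MonoidAlgebra k G) N]
    (hM : ∀ x : M, ∃ H' : Subgroup G, H'.Normal ∧ IsOpen (H' : Set G) ∧
      ∀ h ∈ H', (MonoidAlgebra.of k G h) • x = x)
    (f : M →ₗ[MonoidAlgebra k G] N) (hf : Surjective f)
    (g : MonoidAlgebra k (G ⧸ K) →ₗ[MonoidAlgebra k G] N) :
    ∃ h : MonoidAlgebra k (G ⧸ K) →ₗ[MonoidAlgebra k G] M, f.comp h = g := by
  haveI := ringChar.charP k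
  set n : N := g (single (1 : G ⧸ K) 1) with hn_def
  have hn : ∀ κ ∈ K, MonoidAlgebra.of k G κ • n = n := by
    intro κ hκ
    rw [hn_def, ← map_smul, qm_of_smul_fixed K κ hκ]
  obtain ⟨m, hfm⟩ := hf n
  obtain ⟨K₁, hK₁n, hK₁o, hK₁fix⟩ := hM m
  haveI := hK₁n
  set K' : Subgroup G := K ⊓ K₁ with hK'
  haveI : K'.Normal := Subgroup.normal_inf_normal K K₁
  have hK'o : IsOpen (K' : Set G) := by
    rw [hK', Subgroup.coe_inf]; exact hKo.inter hK₁o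
  have hK'K : K' ≤ K := inf_le_left
  have hK'H : K' ≤ H := le_trans hK'K hKH
  have hrel : K'.relIndex K ∣ K'.relIndex H :=
    ⟨K.relIndex H, (Subgroup.relIndex_mul_relIndex K' K H hK'K hKH).symm⟩
  have hndvd : ¬ (ringChar k : ℕ) ∣ K'.relIndex K := fun hd =>
    hH K' ‹K'.Normal› hK'o hK'H (hd.trans hrel)
  set n' : ℕ := K'.relIndex K with hn'
  have hcast : ((n' : k)) ≠ 0 := fun h =>
    hndvd ((CharP.cast_eq_zero_iff k (ringChar k) n').mp h)
  haveI hQfin : Finite (K ⧸ K'.subgroupOf K) := by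
    apply Nat.finite_of_card_ne_zero
    intro h0
    exact hcast (by rw [hn', Subgroup.relIndex, Subgroup.index, h0, Nat.cast_zero])
  letI := Fintype.ofFinite (K ⧸ K'.subgroupOf K)
  -- the orbit map
  have hm_fix : ∀ τ : G, τ ∈ K' → MonoidAlgebra.of k G τ • m = m := fun τ hτ =>
    hK₁fix τ hτ.2
  set νq : (K ⧸ K'.subgroupOf K) → M := Quotient.lift
    (fun (σ : K) => MonoidAlgebra.of k G (σ : G) • m) (by
      intro σ τ hστ
      have h0 : (σ⁻¹ * τ : K) ∈ K'.subgroupOf K := (QuotientGroup.leftRel_apply).mp hστ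
      have h : (((σ⁻¹ * τ : K) : G)) ∈ K' := (Subgroup.mem_subgroupOf).mp h0
      have hb : (τ : G) = (σ : G) * ((σ⁻¹ * τ : K) : G) := by
        push_cast; group
      show MonoidAlgebra.of k G (σ : G) • m = MonoidAlgebra.of k G (τ : G) • m
      conv_rhs => rw [hb, map_mul, mul_smul, hm_fix _ h]) with hνq
  have hνq_mk : ∀ σ : K, νq (QuotientGroup.mk σ) = MonoidAlgebra.of k G (σ : G) • m :=
    fun σ => rfl
  set m'' : M := ∑ q : (K ⧸ K'.subgroupOf K), νq q with hm''
  have hm''fix : ∀ κ ∈ K, MonoidAlgebra.of k G κ • m'' = m'' := by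
    intro κ hκ
    rw [hm'', Finset.smul_sum]
    have hterm : ∀ q, MonoidAlgebra.of k G κ • νq q = νq ((⟨κ, hκ⟩ : K) • q) := by
      intro q
      induction q using Quotient.inductionOn with
      | h σ =>
        have : ((⟨κ, hκ⟩ : K) • (QuotientGroup.mk σ) : K ⧸ K'.subgroupOf K)
            = QuotientGroup.mk ((⟨κ, hκ⟩ : K) * σ) := rfl
        rw [this, hνq_mk, hνq_mk]
        show MonoidAlgebra.of k G κ • (MonoidAlgebra.of k G (σ : G) • m) = _
        rw [← mul_smul, ← map_mul]
        rfl
    calc ∑ q : (K ⧸ K'.subgroupOf K), MonoidAlgebra.of k G κ • νq q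
        = ∑ q : (K ⧸ K'.subgroupOf K), νq ((⟨κ, hκ⟩ : K) • q) := by
          exact Finset.sum_congr rfl (fun q _ => hterm q)
      _ = ∑ q : (K ⧸ K'.subgroupOf K), νq q :=
          Equiv.sum_comp (MulAction.toPerm (⟨κ, hκ⟩ : K)) νq
  have hfm'' : f m'' = (Fintype.card (K ⧸ K'.subgroupOf K)) • n := by
    have hterm : ∀ q : (K ⧸ K'.subgroupOf K), f (νq q) = n := by
      intro q
      induction q using Quotient.inductionOn with
      | h σ =>
        rw [hνq_mk, map_smul, hfm]
        exact hn σ σ.2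
    rw [hm'', map_sum, Finset.sum_congr rfl (fun q _ => hterm q), Finset.sum_const,
      Finset.card_univ]
  set a : MonoidAlgebra k G := algebraMap k (MonoidAlgebra k G) ((n' : k)⁻¹) with ha
  set m' : M := a • m'' with hm'
  have hm'fix : ∀ κ ∈ K, MonoidAlgebra.of k G κ • m' = m' := by
    intro κ hκ
    rw [hm', ← mul_smul, ha, ← Algebra.commutes, mul_smul, hm''fix κ hκ]
  have hcard : (Fintype.card (K ⧸ K'.subgroupOf K)) = n' := by
    rw [hn', Subgroup.relIndex, Subgroup.index, Nat.card_eq_fintype_card]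
  have hfm' : f m' = n := by
    rw [hm', map_smul, hfm'', hcard, ← Nat.cast_smul_eq_nsmul (MonoidAlgebra k G) n' n,
      ← mul_smul, ha]
    have : (n' : MonoidAlgebra k G) = algebraMap k (MonoidAlgebra k G) ((n' : k)) := by
      rw [map_natCast]
    rw [this, ← map_mul, inv_mul_cancel₀ hcast, map_one, one_smul]
  refine ⟨liftQM K m' hm'fix, qm_ext K _ _ ?_⟩
  show f (liftQM K m' hm'fix (single (1 : G ⧸ K) 1)) = n
  rw [liftQM_one, hfm']




variable (k) in
noncomputable def QMod (K : Subgroup G) [K.Normal] : ModuleCat.{0} (MonoidAlgebra k G) :=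
  ModuleCat.of (MonoidAlgebra k G) (MonoidAlgebra k (G ⧸ K))

theorem QMod_discrete (K : Subgroup G) [K.Normal] (hKo : IsOpen (K : Set G)) :
    IsDiscreteGModK G k (QMod k K) :=
  fun x => ⟨K, inferInstance, hKo, fun κ hκ => qm_of_smul_fixed K κ hκ x⟩

/-- the natural projection `k[G/K'] → k[G/K]` for `K' ≤ K`. -/
noncomputable def qmProj (K' K : Subgroup G) [K'.Normal] [K.Normal] (hle : K' ≤ K) :
    MonoidAlgebra k (G ⧸ K') →ₗ[MonoidAlgebra k G] MonoidAlgebra k (G ⧸ K) :=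
  liftQM K' (single (1 : G ⧸ K) 1)
    (fun κ hκ => qm_of_smul_fixed K κ (hle hκ) _)

theorem qmProj_single (K' K : Subgroup G) [K'.Normal] [K.Normal] (hle : K' ≤ K)
    (g : G) (c : k) :
    qmProj K' K hle (single ((g : G ⧸ K')) c) = single ((g : G ⧸ K)) c := by
  rw [qmProj, liftQM_single, nuFun_mk]
  have h1 : (MonoidAlgebra.of k G g) • (single (1 : G ⧸ K) 1 : MonoidAlgebra k (G ⧸ K))
      = single ((g : G ⧸ K)) 1 := by
    rw [MonoidAlgebra.of_apply, qm_single_smul_single, mul_one, mul_one]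
  rw [h1]
  have h2 : (algebraMap k (MonoidAlgebra k G)) c = single (1 : G) c := by
    simp [MonoidAlgebra.coe_algebraMap]
  rw [h2, qm_single_smul_single, mul_one]
  simp

theorem qmProj_surjective (K' K : Subgroup G) [K'.Normal] [K.Normal] (hle : K' ≤ K) :
    Surjective (qmProj (k := k) K' K hle) := by
  intro z
  induction z using MonoidAlgebra.induction_linear with
  | zero => exact ⟨0, map_zero _⟩
  | add a b ha hb =>
    obtain ⟨ya, hya⟩ := ha; obtain ⟨yb, hyb⟩ := hb
    exact ⟨ya + yb, by rw [map_add, hya, hyb]⟩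
  | single q c =>
    induction q using Quotient.inductionOn with
    | h g => exact ⟨single ((g : G ⧸ K')) c, qmProj_single K' K hle g c⟩


section phi
variable (K : Subgroup G) [K.Normal] [Finite (G ⧸ K)]
variable {M : Type} [AddCommGroup M] [Module (MonoidAlgebra k G) M]
variable (lam : M → k)

noncomputable def cfFun (hK : ∀ κ ∈ K, ∀ a : M, lam (MonoidAlgebra.of k G κ • a) = lam a)
    (m : M) : G ⧸ K → k :=
  Quotient.lift (fun g => lam (MonoidAlgebra.of k G g⁻¹ • m)) (by
    intro a b hab
    have h : a⁻¹ * b ∈ K := (QuotientGroup.leftRel_apply).mp hab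
    have hb : b⁻¹ = (a⁻¹ * b)⁻¹ * a⁻¹ := by group
    show lam (MonoidAlgebra.of k G a⁻¹ • m) = lam (MonoidAlgebra.of k G b⁻¹ • m)
    rw [hb, map_mul, mul_smul, hK _ (inv_mem h)])

theorem cfFun_mk (hK : ∀ κ ∈ K, ∀ a : M, lam (MonoidAlgebra.of k G κ • a) = lam a)
    (m : M) (g : G) :
    cfFun K lam hK m ((g : G ⧸ K)) = lam (MonoidAlgebra.of k G g⁻¹ • m) := rfl

noncomputable def phiFun (hK : ∀ κ ∈ K, ∀ a : M, lam (MonoidAlgebra.of k G κ • a) = lam a)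
    (m : M) : MonoidAlgebra k (G ⧸ K) :=
  MonoidAlgebra.ofCoeff (Finsupp.equivFunOnFinite.symm (cfFun K lam hK m))

theorem phiFun_apply (hK : ∀ κ ∈ K, ∀ a : M, lam (MonoidAlgebra.of k G κ • a) = lam a)
    (m : M) (q : G ⧸ K) :
    (phiFun K lam hK m).coeff q = cfFun K lam hK m q := rfl

variable (hadd : ∀ a b : M, lam (a + b) = lam a + lam b)
variable (hsmul : ∀ (c : k) (a : M),
  lam ((algebraMap k (MonoidAlgebra k G) c) • a) = c * lam a)
variable (hK : ∀ κ ∈ K, ∀ a : M, lam (MonoidAlgebra.of k G κ • a) = lam a)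

include hadd in
theorem phiFun_add (m m' : M) :
    phiFun K lam hK (m + m') = phiFun K lam hK m + phiFun K lam hK m' := by
  ext q
  rw [MonoidAlgebra.coeff_add, Finsupp.add_apply, phiFun_apply, phiFun_apply, phiFun_apply]
  induction q using Quotient.inductionOn with
  | h u => rw [cfFun_mk, cfFun_mk, cfFun_mk, smul_add, hadd]

include hadd in
theorem lam_zero : lam 0 = 0 := by
  have h := hadd 0 0
  rw [add_zero] at h
  nth_rewrite 1 [← add_zero (lam 0)] at h
  exact (add_left_cancel h).symm

include hadd in
theorem phiFun_zero : phiFun K lam hK 0 = 0 := by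
  ext q
  rw [phiFun_apply, MonoidAlgebra.coeff_zero, Finsupp.coe_zero, Pi.zero_apply]
  induction q using Quotient.inductionOn with
  | h u => rw [cfFun_mk, smul_zero, lam_zero lam hadd]

include hadd hsmul in
theorem phiFun_smul (r : MonoidAlgebra k G) (m : M) :
    phiFun K lam hK (r • m) = r • phiFun K lam hK m := by
  induction r using MonoidAlgebra.induction_linear with
  | zero => rw [zero_smul, zero_smul, phiFun_zero K lam hadd hK]
  | add r s hr hs =>
    rw [add_smul, add_smul, phiFun_add K lam hadd hK, hr, hs]
  | single g d =>
    ext q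
    induction q using Quotient.inductionOn with
    | h u =>
      show (phiFun K lam hK ((single g d : MonoidAlgebra k G) • m)).coeff ((u : G ⧸ K))
          = ((single g d : MonoidAlgebra k G) • phiFun K lam hK m).coeff ((u : G ⧸ K))
      have hL : (single g d : MonoidAlgebra k G) • m
          = (algebraMap k (MonoidAlgebra k G) d) • (MonoidAlgebra.of k G (g) • m) := by
        rw [← mul_smul, ← MonoidAlgebra.single_eq_algebraMap_mul_of]
      have hR : ((single g d : MonoidAlgebra k G) • phiFun K lam hK m).coeff ((u : G ⧸ K))
          = d * lam (MonoidAlgebra.of k G (g⁻¹ * u)⁻¹ • m) := by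
        rw [qm_smul_def, qmHom_single, MonoidAlgebra.coeff_single_mul_apply]
        have hq : ((g : G ⧸ K))⁻¹ * ((u : G ⧸ K)) = (((g⁻¹ * u : G)) : G ⧸ K) := rfl
        rw [hq, phiFun_apply, cfFun_mk]
      rw [hR, phiFun_apply, cfFun_mk, hL, ← mul_smul, ← Algebra.commutes, mul_smul, hsmul,
        ← mul_smul, ← map_mul]
      have hg : u⁻¹ * g = (g⁻¹ * u)⁻¹ := by group
      rw [hg]

noncomputable def phiMap : M →ₗ[MonoidAlgebra k G] MonoidAlgebra k (G ⧸ K) where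
  toFun := phiFun K lam hK
  map_add' := phiFun_add K lam hadd hK
  map_smul' := phiFun_smul K lam hadd hsmul hK

theorem phiMap_apply (m : M) (q : G ⧸ K) :
    (phiMap K lam hadd hsmul hK m).coeff q = cfFun K lam hK m q := rfl

end phi

/-- the induced map `G/K' → G/K` for `K' ≤ K`. -/
noncomputable def qmPr (K' K : Subgroup G) [K'.Normal] [K.Normal] (hle : K' ≤ K) :
    G ⧸ K' →* G ⧸ K :=
  QuotientGroup.map K' K (MonoidHom.id G) (fun _ hx => hle hx)

theorem qmPr_mk (K' K : Subgroup G) [K'.Normal] [K.Normal] (hle : K' ≤ K) (g : G) :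
    qmPr K' K hle ((g : G ⧸ K')) = ((g : G ⧸ K)) := by
  rw [qmPr]
  rfl

theorem qmProj_apply_one (K' K : Subgroup G) [K'.Normal] [K.Normal] (hle : K' ≤ K)
    [Fintype (G ⧸ K')] [DecidableEq (G ⧸ K)] [DecidableEq (G ⧸ K')] (y : MonoidAlgebra k (G ⧸ K')) :
    (qmProj K' K hle y).coeff (1 : G ⧸ K)
      = ∑ q' : G ⧸ K', (if qmPr K' K hle q' = 1 then y.coeff q' else 0) := by
  induction y using MonoidAlgebra.induction_linear with
  | zero => simp
  | add a b ha hb =>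
    rw [map_add, MonoidAlgebra.coeff_add, Finsupp.add_apply, ha, hb, ← Finset.sum_add_distrib]
    apply Finset.sum_congr rfl
    intro q' _
    rw [MonoidAlgebra.coeff_add, Finsupp.add_apply]
    split_ifs <;> simp
  | single q c =>
    induction q using Quotient.inductionOn with
    | h g =>
      rw [qmProj_single K' K hle g c, MonoidAlgebra.coeff_single, Finsupp.single_apply, ← qmPr_mk K' K hle g]
      have hterm : ∀ q' ∈ Finset.univ,
          (if qmPr K' K hle q' = 1 then (single ((g : G ⧸ K')) c : MonoidAlgebra k (G ⧸ K')).coeff q' else 0)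
          = if ((g : G ⧸ K')) = q' then (if qmPr K' K hle q' = 1 then c else 0) else 0 := by
        intro q' _
        rw [MonoidAlgebra.coeff_single, Finsupp.single_apply]
        split_ifs with h1 h2 <;> first | rfl | (try simp_all)
      rw [Finset.sum_congr rfl hterm, Finset.sum_ite_eq]
      simp

theorem fixed_mem_span {P : ModuleCat.{0} (MonoidAlgebra k G)}
    (hP : IsProjectiveDiscreteGModK G k P)
    (hnc : ∀ Hs : Subgroup G, Hs.Normal → IsOpen (Hs : Set G) →
      ∃ Ks : Subgroup G, Ks.Normal ∧ IsOpen (Ks : Set G) ∧ Ks ≤ Hs ∧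
        (ringChar k : ℕ) ∣ Ks.relIndex Hs)
    (K : Subgroup G) [K.Normal] (hKo : IsOpen (K : Set G))
    (x : P) (hx : ∀ κ ∈ K, MonoidAlgebra.of k G κ • x = x) :
    x ∈ Submodule.span (MonoidAlgebra k G)
      {y : P | ∃ κ ∈ K, ∃ m : P, y = MonoidAlgebra.of k G κ • m - m} := by
  haveI := ringChar.charP k
  by_contra hxU
  set U : Submodule (MonoidAlgebra k G) P := Submodule.span (MonoidAlgebra k G)
    {y : P | ∃ κ ∈ K, ∃ m : P, y = MonoidAlgebra.of k G κ • m - m} with hU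
  letI : Module k (P ⧸ U) := Module.compHom _ (algebraMap k (MonoidAlgebra k G))
  have hxbar : U.mkQ x ≠ 0 := fun h => hxU ((Submodule.Quotient.mk_eq_zero U).mp h)
  have hexists : ∃ φ : Module.Dual k (P ⧸ U), φ (U.mkQ x) ≠ 0 := by
    by_contra hall
    push_neg at hall
    exact hxbar ((Module.forall_dual_apply_eq_zero_iff k (U.mkQ x)).mp hall)
  obtain ⟨lam0, hlam0⟩ := hexists
  set lam : P → k := fun m => lam0 (U.mkQ m) with hlam
  have hadd : ∀ a b : P, lam (a + b) = lam a + lam b := by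
    intro a b
    show lam0 (U.mkQ (a + b)) = lam0 (U.mkQ a) + lam0 (U.mkQ b)
    rw [map_add, map_add]
  have hsmul : ∀ (c : k) (a : P),
      lam ((algebraMap k (MonoidAlgebra k G) c) • a) = c * lam a := by
    intro c a
    show lam0 (U.mkQ ((algebraMap k (MonoidAlgebra k G) c) • a)) = c * lam0 (U.mkQ a)
    rw [map_smul]
    show lam0 (c • (U.mkQ a)) = c * lam0 (U.mkQ a)
    rw [map_smul, smul_eq_mul]
  have hKlam : ∀ κ ∈ K, ∀ a : P, lam (MonoidAlgebra.of k G κ • a) = lam a := by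
    intro κ hκ a
    have hmk : U.mkQ (MonoidAlgebra.of k G κ • a) = U.mkQ a := by
      rw [← sub_eq_zero, ← map_sub, Submodule.mkQ_apply]
      exact (Submodule.Quotient.mk_eq_zero U).mpr
        (Submodule.subset_span ⟨κ, hκ, a, rfl⟩)
    show lam0 (U.mkQ (MonoidAlgebra.of k G κ • a)) = lam0 (U.mkQ a)
    rw [hmk]
  -- get a deeper subgroup with p ∣ index
  obtain ⟨K', hK'n, hK'o, hK'K, hK'dvd⟩ := hnc K inferInstance hKo
  haveI := hK'n
  haveI : Finite (G ⧸ K) := Subgroup.quotient_finite_of_isOpen K hKo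
  haveI : Finite (G ⧸ K') := Subgroup.quotient_finite_of_isOpen K' hK'o
  letI : Fintype (G ⧸ K') := Fintype.ofFinite _
  letI : DecidableEq (G ⧸ K) := Classical.decEq _
  letI : DecidableEq (G ⧸ K') := Classical.decEq _
  -- the equivariant functional φ : P → k[G/K]
  set φ : (P : Type) →ₗ[MonoidAlgebra k G] MonoidAlgebra k (G ⧸ K) :=
    phiMap K lam hadd hsmul hKlam with hφ
  -- lift through the projection k[G/K'] → k[G/K]
  obtain ⟨ψ, hψ⟩ := hP (QMod k K') (QMod k K) (QMod_discrete K' hK'o) (QMod_discrete K hKo)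
    (qmProj K' K hK'K) (qmProj_surjective K' K hK'K) φ
  set y : MonoidAlgebra k (G ⧸ K') := ψ x with hy
  have hyfix : ∀ κ ∈ K, MonoidAlgebra.of k G κ • y = y := by
    intro κ hκ
    rw [hy]
    calc MonoidAlgebra.of k G κ • ψ x = ψ (MonoidAlgebra.of k G κ • x) :=
          (map_smul ψ _ x).symm
      _ = ψ x := by rw [hx κ hκ]
  have h1 : qmProj K' K hK'K y = φ x := LinearMap.congr_fun hψ x
  have h2 : (φ x).coeff (1 : G ⧸ K) = lam x := by
    rw [hφ]
    have hone : (1 : G ⧸ K) = (((1 : G) : G ⧸ K)) := rfl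
    rw [phiMap_apply, hone, cfFun_mk, inv_one, map_one, one_smul]
  have h3 : ∀ q' : G ⧸ K', qmPr K' K hK'K q' = 1 → y.coeff q' = y.coeff 1 := by
    intro q' h
    induction q' using Quotient.inductionOn with
    | h g =>
      rw [qmPr_mk] at h
      have hg : g ∈ K := (QuotientGroup.eq_one_iff g).mp h
      show y.coeff ((g : G ⧸ K')) = y.coeff (1 : G ⧸ K')
      conv_lhs => rw [← hyfix g hg]
      rw [qm_smul_def, MonoidAlgebra.of_apply, qmHom_single,
        MonoidAlgebra.coeff_single_mul_apply, inv_mul_cancel, one_mul]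
  have h4 : (qmProj K' K hK'K y).coeff (1 : G ⧸ K)
      = ∑ q' : G ⧸ K', (if qmPr K' K hK'K q' = 1 then y.coeff 1 else 0) := by
    rw [qmProj_apply_one]
    exact Finset.sum_congr rfl (fun q' _ => by
      by_cases h : qmPr K' K hK'K q' = 1
      · rw [if_pos h, if_pos h, h3 q' h]
      · rw [if_neg h, if_neg h])
  have h5 : ∑ q' : G ⧸ K', (if qmPr K' K hK'K q' = 1 then y.coeff 1 else 0)
      = ((Finset.univ.filter (fun q' => qmPr K' K hK'K q' = 1)).card) • y.coeff 1 := by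
    rw [← Finset.sum_filter, Finset.sum_const]
  -- cardinality
  have hto : ∀ σ : K, qmPr K' K hK'K (((σ : G) : G ⧸ K')) = 1 := fun σ => by
    rw [qmPr_mk]; exact (QuotientGroup.eq_one_iff _).mpr σ.2
  set eTo : (K ⧸ K'.subgroupOf K) → {q' : G ⧸ K' // qmPr K' K hK'K q' = 1} :=
    Quotient.lift (fun σ : K => (⟨(((σ : G)) : G ⧸ K'), hto σ⟩ :
      {q' : G ⧸ K' // qmPr K' K hK'K q' = 1})) (by
        intro σ τ hστ
        have h0 : (σ⁻¹ * τ : K) ∈ K'.subgroupOf K := QuotientGroup.leftRel_apply.mp hστ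
        have hmem : ((σ : G))⁻¹ * (τ : G) ∈ K' := by
          have h0' := Subgroup.mem_subgroupOf.mp h0
          push_cast at h0'
          exact h0'
        exact Subtype.ext (QuotientGroup.eq.mpr hmem)) with heTo
  have hbij : Bijective eTo := by
    constructor
    · intro q1 q2
      induction q1 using Quotient.inductionOn with
      | h σ =>
        induction q2 using Quotient.inductionOn with
        | h τ =>
          intro hst
          have heq : (((σ : G)) : G ⧸ K') = (((τ : G)) : G ⧸ K') :=
            congrArg Subtype.val hst
          have h2m : ((σ : G))⁻¹ * (τ : G) ∈ K' := QuotientGroup.eq.mp heq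
          exact Quotient.sound (QuotientGroup.leftRel_apply.mpr
            (Subgroup.mem_subgroupOf.mpr (by push_cast; exact h2m)))
    · rintro ⟨q', hq'⟩
      induction q' using Quotient.inductionOn with
      | h g =>
        have hq'' : ((g : G ⧸ K)) = 1 := by rw [← qmPr_mk K' K hK'K g]; exact hq'
        have hg : g ∈ K := (QuotientGroup.eq_one_iff g).mp hq''
        exact ⟨QuotientGroup.mk (⟨g, hg⟩ : K), Subtype.ext rfl⟩
  have hcard2 : K'.relIndex K = Nat.card {q' : G ⧸ K' // qmPr K' K hK'K q' = 1} := by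
    rw [Subgroup.relIndex, Subgroup.index]
    exact Nat.card_congr (Equiv.ofBijective eTo hbij)
  have hcard3 : Nat.card {q' : G ⧸ K' // qmPr K' K hK'K q' = 1}
      = (Finset.univ.filter (fun q' => qmPr K' K hK'K q' = 1)).card := by
    rw [Nat.card_eq_fintype_card]
    exact Fintype.card_subtype _
  have hfiltercard : (Finset.univ.filter (fun q' => qmPr K' K hK'K q' = 1)).card
      = K'.relIndex K := by rw [hcard2, hcard3]
  have hzero : ((K'.relIndex K : k)) = 0 :=
    (CharP.cast_eq_zero_iff k (ringChar k) _).mpr hK'dvd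
  have hfinal : lam x = 0 := by
    rw [← h2, ← h1, h4, h5, hfiltercard, nsmul_eq_mul, hzero, zero_mul]
  exact hlam0 hfinal

theorem finset_inf_normal_open {ι : Type} (S : Finset ι) (KF : ι → Subgroup G)
    (hn : ∀ i, (KF i).Normal) (ho : ∀ i, IsOpen ((KF i : Set G))) :
    (S.inf KF).Normal ∧ IsOpen (((S.inf KF : Subgroup G) : Set G)) := by
  induction S using Finset.cons_induction with
  | empty =>
    rw [Finset.inf_empty]
    refine ⟨?_, ?_⟩
    · infer_instance
    · rw [Subgroup.coe_top]; exact isOpen_univ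
  | cons a S ha ih =>
    rw [Finset.inf_cons]
    haveI := hn a
    haveI := ih.1
    refine ⟨Subgroup.normal_inf_normal _ _, ?_⟩
    rw [Subgroup.coe_inf]
    exact (ho a).inter ih.2

/-- (c) implies enough projectives -/
theorem enough_proj {H : Subgroup G} (hHn : H.Normal) (hHo : IsOpen (H : Set G))
    (hH : ∀ K : Subgroup G, K.Normal → IsOpen (K : Set G) → K ≤ H →
      ¬ (ringChar k : ℕ) ∣ K.relIndex H)
    (M : ModuleCat.{0} (MonoidAlgebra k G)) (hM : IsDiscreteGModK G k M) :
    ∃ P : ModuleCat.{0} (MonoidAlgebra k G), IsDiscreteGModK G k P ∧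
      IsProjectiveDiscreteGModK G k P ∧
      ∃ f : P →ₗ[MonoidAlgebra k G] M, Surjective f := by
  haveI := hHn
  letI : DecidableEq (M : Type) := Classical.decEq _
  set KF : M → Subgroup G := fun x => H ⊓ (hM x).choose with hKF
  letI hnorm : ∀ x : M, (KF x).Normal := fun x => by
    haveI := (hM x).choose_spec.1
    exact Subgroup.normal_inf_normal _ _
  have hopen : ∀ x : M, IsOpen ((KF x : Set G)) := fun x => by
    rw [hKF]; rw [Subgroup.coe_inf]
    exact hHo.inter (hM x).choose_spec.2.1
  have hle : ∀ x : M, KF x ≤ H := fun x => inf_le_left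
  have hfix : ∀ x : M, ∀ κ ∈ KF x, MonoidAlgebra.of k G κ • x = x := fun x κ hκ =>
    (hM x).choose_spec.2.2 κ hκ.2
  set Fam : M → Type := fun x => MonoidAlgebra k (G ⧸ KF x) with hFam
  set P : ModuleCat.{0} (MonoidAlgebra k G) :=
    ModuleCat.of (MonoidAlgebra k G) (DirectSum (M : Type) Fam) with hP
  refine ⟨P, ?_, ?_, ?_⟩
  · -- discrete
    intro z
    induction z using DirectSum.induction_on with
    | zero =>
      exact ⟨⊤, inferInstance, by rw [Subgroup.coe_top]; exact isOpen_univ,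
        fun h _ => smul_zero _⟩
    | of x y =>
      refine ⟨KF x, hnorm x, hopen x, fun κ hκ => ?_⟩
      have h1 : (DirectSum.of Fam x) y = (DirectSum.lof (MonoidAlgebra k G) (M : Type) Fam x) y := rfl
      rw [h1]
      calc MonoidAlgebra.of k G κ • (DirectSum.lof (MonoidAlgebra k G) (M : Type) Fam x) y
          = (DirectSum.lof (MonoidAlgebra k G) (M : Type) Fam x)
              (MonoidAlgebra.of k G κ • y) := (map_smul _ _ _).symm
        _ = _ := by rw [qm_of_smul_fixed (KF x) κ hκ y]
    | add a b ha hb =>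
      obtain ⟨K₁, hn1, ho1, hf1⟩ := ha
      obtain ⟨K₂, hn2, ho2, hf2⟩ := hb
      haveI := hn1; haveI := hn2
      refine ⟨K₁ ⊓ K₂, Subgroup.normal_inf_normal _ _,
        by rw [Subgroup.coe_inf]; exact ho1.inter ho2, fun κ hκ => ?_⟩
      rw [smul_add, hf1 κ hκ.1, hf2 κ hκ.2]
  · -- projective
    intro M' N' hM' hN' f hf g
    have hlift : ∀ x : M, ∃ hx : Fam x →ₗ[MonoidAlgebra k G] M',
        f.comp hx = g.comp (DirectSum.lof (MonoidAlgebra k G) (M : Type) Fam x) :=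
      fun x => qm_lift_exists hHn hHo hH (KF x) (hopen x) (hle x) hM' f hf
        (g.comp (DirectSum.lof (MonoidAlgebra k G) (M : Type) Fam x))
    choose hcomp hspec using hlift
    refine ⟨DirectSum.toModule (MonoidAlgebra k G) (M : Type) M' hcomp, ?_⟩
    apply DirectSum.linearMap_ext
    intro x
    ext v
    exact (congrArg f (DirectSum.toModule_lof _ _ _)).trans
      (LinearMap.congr_fun (hspec x) v)
  · -- surjection
    refine ⟨DirectSum.toModule (MonoidAlgebra k G) (M : Type) M
      (fun x => liftQM (KF x) x (hfix x)), ?_⟩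
    intro m
    refine ⟨DirectSum.lof (MonoidAlgebra k G) (M : Type) Fam m (single 1 1), ?_⟩
    exact (DirectSum.toModule_lof _ _ _).trans (liftQM_one _ _ _)
/-- a nonzero discrete projective implies condition (c) cannot fail everywhere -/
theorem proj_implies_cond (P : ModuleCat.{0} (MonoidAlgebra k G))
    (hPd : IsDiscreteGModK G k P) (hPn : Nontrivial P)
    (hPp : IsProjectiveDiscreteGModK G k P)
    (hnc : ∀ Hs : Subgroup G, Hs.Normal → IsOpen (Hs : Set G) →
      ∃ Ks : Subgroup G, Ks.Normal ∧ IsOpen (Ks : Set G) ∧ Ks ≤ Hs ∧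
        (ringChar k : ℕ) ∣ Ks.relIndex Hs) : False := by
  letI : DecidableEq (P : Type) := Classical.decEq _
  set KF : P → Subgroup G := fun x => (hPd x).choose with hKF
  letI hnorm : ∀ x : P, (KF x).Normal := fun x => (hPd x).choose_spec.1
  have hopen : ∀ x : P, IsOpen ((KF x : Set G)) := fun x => (hPd x).choose_spec.2.1
  have hfix : ∀ x : P, ∀ κ ∈ KF x, MonoidAlgebra.of k G κ • x = x := fun x =>
    (hPd x).choose_spec.2.2
  set Fam : P → Type := fun x => MonoidAlgebra k (G ⧸ KF x) with hFam
  set F : ModuleCat.{0} (MonoidAlgebra k G) :=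
    ModuleCat.of (MonoidAlgebra k G) (DirectSum (P : Type) Fam) with hF
  -- F is discrete
  have hFd : IsDiscreteGModK G k F := by
    intro z
    induction z using DirectSum.induction_on with
    | zero =>
      exact ⟨⊤, inferInstance, by rw [Subgroup.coe_top]; exact isOpen_univ,
        fun h _ => smul_zero _⟩
    | of x y =>
      refine ⟨KF x, hnorm x, hopen x, fun κ hκ => ?_⟩
      have h1 : (DirectSum.of Fam x) y
          = (DirectSum.lof (MonoidAlgebra k G) (P : Type) Fam x) y := rfl
      rw [h1]
      calc MonoidAlgebra.of k G κ • (DirectSum.lof (MonoidAlgebra k G) (P : Type) Fam x) y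
          = (DirectSum.lof (MonoidAlgebra k G) (P : Type) Fam x)
              (MonoidAlgebra.of k G κ • y) := (map_smul _ _ _).symm
        _ = _ := by rw [qm_of_smul_fixed (KF x) κ hκ y]
    | add a b ha hb =>
      obtain ⟨K₁, hn1, ho1, hf1⟩ := ha
      obtain ⟨K₂, hn2, ho2, hf2⟩ := hb
      haveI := hn1; haveI := hn2
      refine ⟨K₁ ⊓ K₂, Subgroup.normal_inf_normal _ _,
        by rw [Subgroup.coe_inf]; exact ho1.inter ho2, fun κ hκ => ?_⟩
      rw [smul_add, hf1 κ hκ.1, hf2 κ hκ.2]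
  -- the canonical surjection F → P
  set fF : F →ₗ[MonoidAlgebra k G] P :=
    DirectSum.toModule (MonoidAlgebra k G) (P : Type) P
      (fun x => liftQM (KF x) x (hfix x)) with hfF
  have hfFs : Surjective fF := by
    intro m
    refine ⟨DirectSum.lof (MonoidAlgebra k G) (P : Type) Fam m (single 1 1), ?_⟩
    exact (DirectSum.toModule_lof _ _ _).trans (liftQM_one _ _ _)
  -- split it using projectivity of P
  obtain ⟨s, hs⟩ := hPp F P hFd hPd fF hfFs LinearMap.id
  -- pick a nonzero element
  obtain ⟨x, hx0⟩ := exists_ne (0 : P)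
  letI : ∀ (y : P) (v : Fam y), Decidable (v ≠ 0) := fun _ _ => Classical.dec _
  set S : Finset (P : Type) := DFinsupp.support (s x : DirectSum (P : Type) Fam) with hS
  set K₀ : Subgroup G := KF x ⊓ S.inf KF with hK₀
  obtain ⟨hK₀n, hK₀o⟩ : (S.inf KF).Normal ∧ IsOpen (((S.inf KF : Subgroup G) : Set G)) :=
    finset_inf_normal_open S KF hnorm hopen
  haveI := hK₀n
  haveI : K₀.Normal := Subgroup.normal_inf_normal _ _
  have hK₀open : IsOpen ((K₀ : Set G)) := by
    rw [hK₀, Subgroup.coe_inf]; exact (hopen x).inter hK₀o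
  have hxfix : ∀ κ ∈ K₀, MonoidAlgebra.of k G κ • x = x := fun κ hκ =>
    hfix x κ hκ.1
  -- the key span membership
  have hxspan := fixed_mem_span hPp hnc K₀ hK₀open x hxfix
  -- components of s x vanish
  have hcomp : ∀ j, DirectSum.component (MonoidAlgebra k G) (P : Type) Fam j
      ((s x : DirectSum (P : Type) Fam)) = 0 := by
    intro j
    by_cases hj : j ∈ S
    · have hK₀le : K₀ ≤ KF j := le_trans inf_le_right (Finset.inf_le hj)
      set πj : P →ₗ[MonoidAlgebra k G] Fam j :=
        (DirectSum.component (MonoidAlgebra k G) (P : Type) Fam j).comp s with hπj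
      have hker : Submodule.span (MonoidAlgebra k G)
          {y : P | ∃ κ ∈ K₀, ∃ m : P, y = MonoidAlgebra.of k G κ • m - m}
          ≤ LinearMap.ker πj := by
        rw [Submodule.span_le]
        rintro y ⟨κ, hκ, m, rfl⟩
        rw [SetLike.mem_coe, LinearMap.mem_ker, map_sub]
        have h1 : πj (MonoidAlgebra.of k G κ • m) = MonoidAlgebra.of k G κ • πj m :=
          map_smul πj _ m
        rw [h1, qm_of_smul_fixed (KF j) κ (hK₀le hκ), sub_self]
      have hm := hker hxspan
      rw [LinearMap.mem_ker] at hm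
      exact hm
    · rw [← DirectSum.apply_eq_component]
      exact DFinsupp.notMem_support_iff.mp hj
  have hsx : (s x : DirectSum (P : Type) Fam) = 0 := by
    apply DirectSum.ext_component (MonoidAlgebra k G)
    intro j
    rw [hcomp j, map_zero]
  have : x = 0 := by
    have h1 : fF (s x) = x := LinearMap.congr_fun hs x
    rw [hsx, map_zero] at h1
    exact h1.symm
  exact hx0 this
end proj
end CK

/-- **(Chirvasitu–Kanda, Theorem 3.1.)** For a profinite group `G` and a field `k`, the
following are equivalent: (a) the category of discrete `G`-modules over `k` has a non-zero
projective object; (b) it has enough projectives; (c) there is an open normal subgroup `H`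
of `G` such that `char k` divides no index `[H : K]` for open normal `K ≤ H` (i.e. `char k`
has finite exponent in the supernatural order of `G`). -/
theorem stmt_2 (G : Type) [Group G] [TopologicalSpace G] [IsTopologicalGroup G]
    [CompactSpace G] [T2Space G] [TotallyDisconnectedSpace G] (k : Type) [Field k] :
    ((∃ P : ModuleCat.{0} (MonoidAlgebra k G),
        IsDiscreteGModK G k P ∧ Nontrivial P ∧ IsProjectiveDiscreteGModK G k P) ↔
      (∃ H : Subgroup G, H.Normal ∧ IsOpen (H : Set G) ∧
        ∀ K : Subgroup G, K.Normal → IsOpen (K : Set G) → K ≤ H →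
          ¬ (ringChar k : ℕ) ∣ K.relIndex H)) ∧
    ((∀ M : ModuleCat.{0} (MonoidAlgebra k G), IsDiscreteGModK G k M →
        ∃ P : ModuleCat.{0} (MonoidAlgebra k G), IsDiscreteGModK G k P ∧
          IsProjectiveDiscreteGModK G k P ∧
          ∃ f : P →ₗ[MonoidAlgebra k G] M, Surjective f) ↔
      (∃ H : Subgroup G, H.Normal ∧ IsOpen (H : Set G) ∧
        ∀ K : Subgroup G, K.Normal → IsOpen (K : Set G) → K ≤ H →
          ¬ (ringChar k : ℕ) ∣ K.relIndex H)) := by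
  constructor
  · constructor
    · rintro ⟨P, hPd, hPn, hPp⟩
      by_contra hc
      push_neg at hc
      refine CK.proj_implies_cond P hPd hPn hPp ?_
      intro Hs h1 h2
      obtain ⟨Ks, h3, h4, h5, h6⟩ := hc Hs h1 h2
      exact ⟨Ks, h3, h4, h5, h6⟩
    · rintro ⟨H, hHn, hHo, hH⟩
      obtain ⟨P, hPd, hPp, f, hf⟩ := CK.enough_proj hHn hHo hH (CK.QMod k ⊤)
        (CK.QMod_discrete ⊤ (by rw [Subgroup.coe_top]; exact isOpen_univ))
      haveI : Nontrivial (CK.QMod k (⊤ : Subgroup G) : Type) :=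
        inferInstanceAs (Nontrivial (MonoidAlgebra k (G ⧸ (⊤ : Subgroup G))))
      obtain ⟨a, b, hab⟩ := exists_pair_ne (CK.QMod k (⊤ : Subgroup G) : Type)
      obtain ⟨a', ha⟩ := hf a
      obtain ⟨b', hb⟩ := hf b
      have hnt : Nontrivial P :=
        ⟨a', b', fun h => hab (by rw [← ha, ← hb, h])⟩
      exact ⟨P, hPd, hnt, hPp⟩
  · constructor
    · intro hb
      obtain ⟨P, hPd, hPp, f, hf⟩ := hb (CK.QMod k ⊤)
        (CK.QMod_discrete ⊤ (by rw [Subgroup.coe_top]; exact isOpen_univ))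
      haveI : Nontrivial (CK.QMod k (⊤ : Subgroup G) : Type) :=
        inferInstanceAs (Nontrivial (MonoidAlgebra k (G ⧸ (⊤ : Subgroup G))))
      obtain ⟨a, b, hab⟩ := exists_pair_ne (CK.QMod k (⊤ : Subgroup G) : Type)
      obtain ⟨a', ha⟩ := hf a
      obtain ⟨b', hb'⟩ := hf b
      have hnt : Nontrivial P :=
        ⟨a', b', fun h => hab (by rw [← ha, ← hb', h])⟩
      by_contra hc
      push_neg at hc
      refine CK.proj_implies_cond P hPd hnt hPp ?_
      intro Hs h1 h2
      obtain ⟨Ks, h3, h4, h5, h6⟩ := hc Hs h1 h2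
      exact ⟨Ks, h3, h4, h5, h6⟩
    · rintro ⟨H, hHn, hHo, hH⟩ M hM
      exact CK.enough_proj hHn hHo hH M hM
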